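/- The defining ideal of the monomial curve C = C(105,252,119,136) (the gluing of C_1 = C(5,12) and C_2 = C(7,8) with q = 21 and p = 17) is I(C) = ⟨x_1^{12} − x_2^5, y_1^8 − y_2^7, x_1x_2 − y_1^3⟩ ⊂ K[x_1,x_2,y_1,y_2], and the ideal I(C)_* of the tangent cone of C at the origin is generated by G_* = {x_1x_2, x_2^5, y_1^{15}, y_2^7, x_2^4y_1^3, x_2^3y_1^6, x_2^2y_1^9, x_2y_1^{12}}, which is a Gröbner basis of I(C)_* with respect to the negative degree reverse lexicographical ordering with x_2 > y_2 > y_1 > x_1. -/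

import Mathlib

open MvPolynomial

noncomputable section

/-- The total degree of a monomial exponent vector. -/
def monDeg {N : ℕ} (μ : Fin N →₀ ℕ) : ℕ := μ.sum fun _ e => e

/-- The numerical semigroup (additive submonoid of `ℕ`) generated by the `n i`. -/
def numSemigroup {k : ℕ} (n : Fin k → ℕ) : AddSubmonoid ℕ :=
  AddSubmonoid.closure (Set.range n)

/-- The family `n` minimally generates the numerical semigroup `⟨n 0, …⟩`:
no generator lies in the submonoid generated by the remaining ones. -/
def MinimallyGenerates {k : ℕ} (n : Fin k → ℕ) : Prop :=
  ∀ j : Fin k, n j ∉ AddSubmonoid.closure (n '' {i | i ≠ j})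

/-- The defining (toric) ideal `I(C)` of the affine monomial curve
`C(n 0, …, n (k-1))`, i.e. the kernel of `x i ↦ t ^ n i`. -/
def curveIdeal (K : Type*) [Field K] {k : ℕ} (n : Fin k → ℕ) :
    Ideal (MvPolynomial (Fin k) K) :=
  RingHom.ker (aeval (fun i => (Polynomial.X : Polynomial K) ^ n i) :
    MvPolynomial (Fin k) K →ₐ[K] Polynomial K)

/-- The minimal total degree of the monomials occurring in `f`. -/
def minDeg {K : Type*} [Field K] {N : ℕ} (f : MvPolynomial (Fin N) K) : ℕ :=
  sInf (monDeg '' (f.support : Set (Fin N →₀ ℕ)))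

/-- `f₋`, the homogeneous summand of `f` of least degree. -/
def lowHom {K : Type*} [Field K] {N : ℕ} (f : MvPolynomial (Fin N) K) :
    MvPolynomial (Fin N) K :=
  homogeneousComponent (minDeg f) f

/-- `I(C)_*`, the defining ideal of the tangent cone of the monomial curve at the
origin: the ideal generated by the least-degree homogeneous summands `f₋` of the
elements of `I(C)`. -/
def tangentConeIdeal (K : Type*) [Field K] {k : ℕ} (n : Fin k → ℕ) :
    Ideal (MvPolynomial (Fin k) K) :=
  Ideal.span {g | ∃ f ∈ curveIdeal K n, f ≠ 0 ∧ g = lowHom f}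

/-- A Noetherian (graded-)local ring `R` with distinguished maximal ideal `I` is
Cohen-Macaulay iff it admits a regular sequence inside `I` whose length is the Krull
dimension of `R` (i.e. `depth_I R = dim R`). -/
def IsCohenMacaulayWrt (R : Type*) [CommRing R] (I : Ideal R) : Prop :=
  ∃ rs : List R, (∀ r ∈ rs, r ∈ I) ∧ RingTheory.Sequence.IsRegular R rs ∧
    (rs.length : WithBot (WithTop ℕ)) = ringKrullDim R

/-- The irrelevant maximal ideal of the graded ring `K[x]/J`, generated by the images
of the variables. -/
def irrelevantIdeal (K : Type*) [Field K] {N : ℕ} (J : Ideal (MvPolynomial (Fin N) K)) :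
    Ideal (MvPolynomial (Fin N) K ⧸ J) :=
  Ideal.map (Ideal.Quotient.mk J) (Ideal.span (Set.range X))

/-- The monomial curve `C(n 0, …, n (k-1))` has Cohen-Macaulay tangent cone at the
origin: the ring `K[x]/I(C)_*` is Cohen-Macaulay. -/
def HasCMTangentCone (K : Type*) [Field K] {k : ℕ} (n : Fin k → ℕ) : Prop :=
  IsCohenMacaulayWrt (MvPolynomial (Fin k) K ⧸ tangentConeIdeal K n)
    (irrelevantIdeal K (tangentConeIdeal K n))

/-- The Hilbert function of the graded ring `K[x]/J`:
`d ↦ dim_K` of the degree-`d` homogeneous piece. -/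
def gradedHF (K : Type*) [Field K] {N : ℕ} (J : Ideal (MvPolynomial (Fin N) K))
    (d : ℕ) : ℕ :=
  Module.finrank K ((homogeneousSubmodule (Fin N) K d).map
    (Ideal.Quotient.mkₐ K J).toLinearMap)

/-- The Hilbert function of the local ring `K[[t^{n 0}, …, t^{n (k-1)}]]`, i.e. the
Hilbert function of its associated graded ring `K[x]/I(C)_*`. -/
def hilbertFn (K : Type*) [Field K] {k : ℕ} (n : Fin k → ℕ) : ℕ → ℕ :=
  gradedHF K (tangentConeIdeal K n)

/-- `a` is greater than `b` in the negative degree reverse lexicographical order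
determined by the priority function `ρ` (`ρ v < ρ w` means the variable `v` is higher
than `w`; the variable with the largest `ρ`-value is the lowest one): a monomial of
smaller total degree is larger, and ties are broken reverse-lexicographically, i.e.
looking at the lowest variable in which the monomials differ. -/
def NegDegRevLexGT {N : ℕ} (ρ : Fin N → ℕ) (a b : Fin N →₀ ℕ) : Prop :=
  monDeg a < monDeg b ∨ (monDeg a = monDeg b ∧
    ∃ v : Fin N, a v < b v ∧ ∀ w : Fin N, ρ v < ρ w → a w = b w)

/-- `μ` is the exponent vector of the leading monomial `LM f` of `f` with respect to
the negative degree reverse lexicographical order given by `ρ`. -/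
def IsLM {K : Type*} [Field K] {N : ℕ} (ρ : Fin N → ℕ)
    (f : MvPolynomial (Fin N) K) (μ : Fin N →₀ ℕ) : Prop :=
  μ ∈ f.support ∧ ∀ μ' ∈ f.support, μ' ≠ μ → NegDegRevLexGT ρ μ μ'

/-- The leading monomial ideal `⟨LM(I)⟩` of an ideal `I` with respect to the negative
degree reverse lexicographical order given by `ρ`. -/
def lmIdeal (K : Type*) [Field K] {N : ℕ} (ρ : Fin N → ℕ)
    (I : Ideal (MvPolynomial (Fin N) K)) : Ideal (MvPolynomial (Fin N) K) :=
  Ideal.span ((fun μ => monomial μ (1 : K)) '' {μ | ∃ f ∈ I, IsLM ρ f μ})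

/-- `G` is a standard basis of `I` with respect to the local order given by `ρ`:
a finite subset of `I` whose leading monomials generate the leading monomial ideal
of `I`. -/
def IsStandardBasis (K : Type*) [Field K] {N : ℕ} (ρ : Fin N → ℕ)
    (I : Ideal (MvPolynomial (Fin N) K)) (G : Set (MvPolynomial (Fin N) K)) : Prop :=
  G.Finite ∧ G ⊆ (I : Set (MvPolynomial (Fin N) K)) ∧
    lmIdeal K ρ I = Ideal.span ((fun μ => monomial μ (1 : K)) '' {μ | ∃ g ∈ G, IsLM ρ g μ})

/-- `G` is a minimal standard basis of `I`: a standard basis no proper subset of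
which is a standard basis. -/
def IsMinimalStandardBasis (K : Type*) [Field K] {N : ℕ} (ρ : Fin N → ℕ)
    (I : Ideal (MvPolynomial (Fin N) K)) (G : Set (MvPolynomial (Fin N) K)) : Prop :=
  IsStandardBasis K ρ I G ∧ ∀ g ∈ G, ¬ IsStandardBasis K ρ I (G \ {g})

/-- The priority function on `Fin k` describing the variable order
`x_2 > x_3 > ⋯ > x_k > x_1` (variables `x_1, …, x_k` being indexed by `0, …, k-1`),
i.e. the negative degree reverse lexicographical order making `x_1` the lowest
variable. -/
def rotOrder (k : ℕ) : Fin k → ℕ := fun v => if (v : ℕ) = 0 then k - 1 else (v : ℕ) - 1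

/-- The priority function on `Fin (l + k)` describing the variable order
`y_2 > ⋯ > y_k > y_1 > x_2 > ⋯ > x_l > x_1`, where `x_1, …, x_l` are the variables
indexed by `0, …, l-1` and `y_1, …, y_k` are the variables indexed by `l, …, l+k-1`. -/
def glueOrder (l k : ℕ) : Fin (l + k) → ℕ := fun v =>
  if (v : ℕ) < l then (if (v : ℕ) = 0 then k + l - 1 else k + (v : ℕ) - 1)
  else (if (v : ℕ) = l then k - 1 else (v : ℕ) - l - 1)

/-- `S = ⟨q•m, p•n⟩` is a gluing of the numerical semigroups `⟨m⟩` and `⟨n⟩`. -/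
def IsGluing {l k : ℕ} (m : Fin l → ℕ) (n : Fin k → ℕ) (p q : ℕ) : Prop :=
  (∃ b : Fin l → ℕ, p = ∑ i, b i * m i) ∧ (∃ a : Fin k → ℕ, q = ∑ j, a j * n j) ∧
    Nat.Coprime p q ∧ p ∉ Set.range m ∧ q ∉ Set.range n ∧
    Disjoint (Set.range fun i => q * m i) (Set.range fun j => p * n j)

/-- `S = ⟨q•m, p•n⟩` is a nice gluing of the numerical semigroups `⟨m⟩` and `⟨n⟩`:
a gluing in which `q = a₁ * n 0` with `a₁ ≤ b 0 + ⋯ + b (l-1)`. -/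
def IsNiceGluing {l k : ℕ} (hk : 0 < k) (m : Fin l → ℕ) (n : Fin k → ℕ)
    (p q : ℕ) : Prop :=
  ∃ (b : Fin l → ℕ) (a₁ : ℕ), p = ∑ i, b i * m i ∧ q = a₁ * n ⟨0, hk⟩ ∧
    (a₁ ≤ ∑ i, b i) ∧ Nat.Coprime p q ∧ p ∉ Set.range m ∧ q ∉ Set.range n ∧
    Disjoint (Set.range fun i => q * m i) (Set.range fun j => p * n j)

/-- The monomial curve `C(n)` in affine `k`-space is a complete intersection:
its defining ideal is generated by a regular sequence of `k - 1` (codimension many)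
elements. -/
def IsCompleteIntersectionCurve (K : Type*) [Field K] {k : ℕ} (n : Fin k → ℕ) : Prop :=
  ∃ fs : List (MvPolynomial (Fin k) K), fs.length + 1 = k ∧
    RingTheory.Sequence.IsRegular (MvPolynomial (Fin k) K) fs ∧
    Ideal.span {f | f ∈ fs} = curveIdeal K n

/-- A commutative ring is a Gorenstein local ring iff it is Noetherian, has a unique
maximal ideal `I`, and admits a regular sequence `rs` in `I` of length `dim R`
(a system of parameters) such that the zero-dimensional quotient `R/(rs)` has simple
socle (the socle being the submodule killed by `I`). -/
def IsGorensteinLocalRing (R : Type*) [CommRing R] : Prop :=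
  IsNoetherianRing R ∧ ∃ I : Ideal R, I.IsMaximal ∧ (∀ J : Ideal R, J.IsMaximal → J = I) ∧
    ∃ rs : List R, (∀ r ∈ rs, r ∈ I) ∧ RingTheory.Sequence.IsRegular R rs ∧
      (rs.length : WithBot (WithTop ℕ)) = ringKrullDim R ∧
      IsSimpleModule R (Submodule.torsionBySet R (R ⧸ Ideal.span {r | r ∈ rs}) (I : Set R))

/-- The local ring `K[[t^{n 0}, …, t^{n (k-1)}]]`: the subalgebra of `K[[t]]`
consisting of the power series supported on the numerical semigroup `⟨n⟩`. -/
def semigroupPowerSeriesRing (K : Type*) [Field K] {k : ℕ} (n : Fin k → ℕ) :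
    Subalgebra K (PowerSeries K) where
  carrier := {f | ∀ d : ℕ, PowerSeries.coeff (R := K) d f ≠ 0 → d ∈ numSemigroup n}
  add_mem' := by
    intro f g hf hg d hd
    by_cases h : PowerSeries.coeff (R := K) d f ≠ 0
    · exact hf d h
    · push_neg at h
      refine hg d ?_
      rw [map_add, h, zero_add] at hd
      exact hd
  mul_mem' := by
    intro f g hf hg d hd
    rw [PowerSeries.coeff_mul] at hd
    obtain ⟨⟨i, j⟩, hij, hne⟩ := Finset.exists_ne_zero_of_sum_ne_zero hd
    have hd' : i + j = d := (Finset.HasAntidiagonal.mem_antidiagonal).mp hij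
    have hi : PowerSeries.coeff (R := K) i f ≠ 0 := left_ne_zero_of_mul hne
    have hj : PowerSeries.coeff (R := K) j g ≠ 0 := right_ne_zero_of_mul hne
    exact hd' ▸ add_mem (hf i hi) (hg j hj)
  algebraMap_mem' := by
    intro a d hd
    by_cases h : d = 0
    · exact h ▸ zero_mem _
    · exfalso
      apply hd
      rw [PowerSeries.algebraMap_apply, PowerSeries.coeff_C, if_neg h]



def monDeg' {N : ℕ} (μ : Fin N →₀ ℕ) : ℕ := μ.sum fun _ e => e

namespace NonCM

/-- order (semigroup value) of a monomial exponent -/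
def ordm (μ : Fin 4 →₀ ℕ) : ℕ := 105 * μ 0 + 252 * μ 1 + 119 * μ 2 + 136 * μ 3

/-- normal form (standard monomial) predicate -/
def NF (μ : Fin 4 →₀ ℕ) : Prop :=
  (μ 0 = 0 ∨ μ 1 = 0) ∧ μ 1 ≤ 4 ∧ μ 2 ≤ 14 ∧ μ 3 ≤ 6 ∧ (μ 1 ≤ 3 ∨ μ 2 ≤ 2) ∧
  (μ 1 ≤ 2 ∨ μ 2 ≤ 5) ∧ (μ 1 ≤ 1 ∨ μ 2 ≤ 8) ∧ (μ 1 = 0 ∨ μ 2 ≤ 11)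

lemma monDeg'_apply (μ : Fin 4 →₀ ℕ) : monDeg' μ = μ 0 + μ 1 + μ 2 + μ 3 := by
  rw [monDeg', Finsupp.sum_fintype _ _ (fun _ => rfl), Fin.sum_univ_four]

set_option maxHeartbeats 1000000 in
theorem lemL (b c d b' c' d' k : ℕ)
    (hnf2 : b ≤ 4) (hnf3 : c ≤ 14) (hnf4 : d ≤ 6)
    (hnf5 : b ≤ 3 ∨ c ≤ 2) (hnf6 : b ≤ 2 ∨ c ≤ 5) (hnf7 : b ≤ 1 ∨ c ≤ 8)
    (hnf8 : b = 0 ∨ c ≤ 11)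
    (heq : 147*b' + 14*c' + 31*d' + 105*k = 147*b + 14*c + 31*d) :
    (b = 0 → (b' = b ∧ c' = c ∧ d' = d ∧ k = 0)) ∧
    ((b' = b ∧ c' = c ∧ d' = d ∧ k = 0) ∨ b + c + d + k < b' + c' + d') := by
  have hd : d' = d ∨ d' = d + 7 ∨ d' = d + 14 ∨ d' = d + 21 := by omega
  rcases hd with hd | hd | hd | hd <;> subst hd <;> omega

set_option maxHeartbeats 1000000 in
theorem claimB_nat (a b c d a' b' c' d' : ℕ)
    (hnf1 : a = 0 ∨ b = 0)
    (hnf2 : b ≤ 4) (hnf3 : c ≤ 14) (hnf4 : d ≤ 6)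
    (hnf5 : b ≤ 3 ∨ c ≤ 2) (hnf6 : b ≤ 2 ∨ c ≤ 5) (hnf7 : b ≤ 1 ∨ c ≤ 8)
    (hnf8 : b = 0 ∨ c ≤ 11)
    (hord : 105*a' + 252*b' + 119*c' + 136*d' = 105*a + 252*b + 119*c + 136*d)
    (hne : ¬(a' = a ∧ b' = b ∧ c' = c ∧ d' = d)) :
    a' + b' + c' + d' < a + b + c + d := by
  by_contra hcon
  push_neg at hcon
  obtain ⟨k, hk⟩ : ∃ k, a' + b' + c' + d' = a + b + c + d + k :=
    ⟨_, (Nat.add_sub_cancel' hcon).symm⟩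
  have heq : 147*b' + 14*c' + 31*d' + 105*k = 147*b + 14*c + 31*d := by omega
  obtain ⟨hb0, hdisj⟩ := lemL b c d b' c' d' k hnf2 hnf3 hnf4 hnf5 hnf6 hnf7 hnf8 heq
  rcases hdisj with ⟨hb, hc, hd, hk0⟩ | hlt
  · exact hne ⟨by omega, hb, hc, hd⟩
  · rcases hnf1 with ha | hbz
    · omega
    · obtain ⟨hb, hc, hd, hk0⟩ := hb0 hbz
      exact hne ⟨by omega, hb, hc, hd⟩

theorem claimB (μ ν : Fin 4 →₀ ℕ) (hNF : NF μ) (hord : ordm ν = ordm μ) (hne : ν ≠ μ) :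
    monDeg' ν < monDeg' μ := by
  obtain ⟨h1, h2, h3, h4, h5, h6, h7, h8⟩ := hNF
  rw [monDeg'_apply, monDeg'_apply]
  refine claimB_nat (μ 0) (μ 1) (μ 2) (μ 3) (ν 0) (ν 1) (ν 2) (ν 3) h1 h2 h3 h4 h5 h6 h7 h8
    hord fun ⟨e0, e1, e2, e3⟩ => hne ?_
  ext i
  fin_cases i
  exacts [e0, e1, e2, e3]

end NonCM

namespace NonCM

variable {K : Type*} [Field K]

/-- the four curve exponents -/
abbrev nn : Fin 4 → ℕ := ![105, 252, 119, 136]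

/-- the evaluation map -/
abbrev Ψ : MvPolynomial (Fin 4) K →ₐ[K] Polynomial K :=
  aeval (fun i => (Polynomial.X : Polynomial K) ^ nn i)

lemma aeval_monomial' (μ : Fin 4 →₀ ℕ) (c : K) :
    Ψ (monomial μ c) = Polynomial.C c * Polynomial.X ^ ordm μ := by
  rw [aeval_monomial]
  congr 1
  rw [Finsupp.prod_fintype _ _ (fun i => pow_zero _), Fin.prod_univ_four]
  simp only [← pow_mul, ← pow_add]
  rfl

lemma coeff_Ψ (f : MvPolynomial (Fin 4) K) (s : ℕ) :
    (Ψ f).coeff s = ∑ μ ∈ f.support, if ordm μ = s then coeff μ f else 0 := by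
  conv_lhs => rw [f.as_sum, map_sum]
  rw [Polynomial.finset_sum_coeff]
  refine Finset.sum_congr rfl fun μ _ => ?_
  rw [aeval_monomial', Polynomial.coeff_C_mul, Polynomial.coeff_X_pow]
  by_cases h : ordm μ = s
  · simp [h]
  · simp [h, Ne.symm h]

lemma Ψ_ne_zero (f : MvPolynomial (Fin 4) K) (μ : Fin 4 →₀ ℕ) (hμ : μ ∈ f.support)
    (huniq : ∀ ν ∈ f.support, ν ≠ μ → ordm ν ≠ ordm μ) : Ψ f ≠ 0 := by
  intro h
  have h1 : (Ψ f).coeff (ordm μ) = coeff μ f := by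
    rw [coeff_Ψ, Finset.sum_eq_single μ]
    · simp
    · intro ν hν hne; simp [huniq ν hν hne]
    · intro h'; exact absurd hμ h'
  rw [h, Polynomial.coeff_zero] at h1
  exact (mem_support_iff.1 hμ) h1.symm

lemma mem_curveIdeal_iff (f : MvPolynomial (Fin 4) K) :
    f ∈ curveIdeal K nn ↔ Ψ f = 0 := Iff.rfl

end NonCM

namespace NonCM

variable {K : Type*} [Field K]

open Finsupp in
lemma le4 (ν μ : Fin 4 →₀ ℕ) : ν ≤ μ ↔ ν 0 ≤ μ 0 ∧ ν 1 ≤ μ 1 ∧ ν 2 ≤ μ 2 ∧ ν 3 ≤ μ 3 := by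
  constructor
  · intro h; exact ⟨h 0, h 1, h 2, h 3⟩
  · rintro ⟨h0, h1, h2, h3⟩ i
    fin_cases i
    exacts [h0, h1, h2, h3]

/-- the eight leading exponents -/
def E1 : Fin 4 →₀ ℕ := Finsupp.single 0 1 + Finsupp.single 1 1
def E2 : Fin 4 →₀ ℕ := Finsupp.single 1 5
def E3 : Fin 4 →₀ ℕ := Finsupp.single 2 15
def E4 : Fin 4 →₀ ℕ := Finsupp.single 3 7
def E5 : Fin 4 →₀ ℕ := Finsupp.single 1 4 + Finsupp.single 2 3
def E6 : Fin 4 →₀ ℕ := Finsupp.single 1 3 + Finsupp.single 2 6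
def E7 : Fin 4 →₀ ℕ := Finsupp.single 1 2 + Finsupp.single 2 9
def E8 : Fin 4 →₀ ℕ := Finsupp.single 1 1 + Finsupp.single 2 12

def S8 : Set (Fin 4 →₀ ℕ) := {E1, E2, E3, E4, E5, E6, E7, E8}

lemma E1c : E1 0 = 1 ∧ E1 1 = 1 ∧ E1 2 = 0 ∧ E1 3 = 0 := by
  refine ⟨?_, ?_, ?_, ?_⟩ <;> simp [E1, Finsupp.single_apply]
lemma E2c : E2 0 = 0 ∧ E2 1 = 5 ∧ E2 2 = 0 ∧ E2 3 = 0 := by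
  refine ⟨?_, ?_, ?_, ?_⟩ <;> simp [E2, Finsupp.single_apply]
lemma E3c : E3 0 = 0 ∧ E3 1 = 0 ∧ E3 2 = 15 ∧ E3 3 = 0 := by
  refine ⟨?_, ?_, ?_, ?_⟩ <;> simp [E3, Finsupp.single_apply]
lemma E4c : E4 0 = 0 ∧ E4 1 = 0 ∧ E4 2 = 0 ∧ E4 3 = 7 := by
  refine ⟨?_, ?_, ?_, ?_⟩ <;> simp [E4, Finsupp.single_apply]
lemma E5c : E5 0 = 0 ∧ E5 1 = 4 ∧ E5 2 = 3 ∧ E5 3 = 0 := by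
  refine ⟨?_, ?_, ?_, ?_⟩ <;> simp [E5, Finsupp.single_apply]
lemma E6c : E6 0 = 0 ∧ E6 1 = 3 ∧ E6 2 = 6 ∧ E6 3 = 0 := by
  refine ⟨?_, ?_, ?_, ?_⟩ <;> simp [E6, Finsupp.single_apply]
lemma E7c : E7 0 = 0 ∧ E7 1 = 2 ∧ E7 2 = 9 ∧ E7 3 = 0 := by
  refine ⟨?_, ?_, ?_, ?_⟩ <;> simp [E7, Finsupp.single_apply]
lemma E8c : E8 0 = 0 ∧ E8 1 = 1 ∧ E8 2 = 12 ∧ E8 3 = 0 := by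
  refine ⟨?_, ?_, ?_, ?_⟩ <;> simp [E8, Finsupp.single_apply]

lemma NF_iff_no_div (μ : Fin 4 →₀ ℕ) : NF μ ↔ ∀ g ∈ S8, ¬ g ≤ μ := by
  simp only [S8, Set.mem_insert_iff, Set.mem_singleton_iff, forall_eq_or_imp, forall_eq,
    le4, NF]
  obtain ⟨a1, a2, a3, a4⟩ := E1c; obtain ⟨b1, b2, b3, b4⟩ := E2c
  obtain ⟨c1, c2, c3, c4⟩ := E3c; obtain ⟨d1, d2, d3, d4⟩ := E4c
  obtain ⟨e1, e2, e3, e4⟩ := E5c; obtain ⟨f1, f2, f3, f4⟩ := E6c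
  obtain ⟨g1, g2, g3, g4⟩ := E7c; obtain ⟨h1, h2, h3, h4⟩ := E8c
  rw [a1, a2, a3, a4, b1, b2, b3, b4, c1, c2, c3, c4, d1, d2, d3, d4,
    e1, e2, e3, e4, f1, f2, f3, f4, g1, g2, g3, g4, h1, h2, h3, h4]
  omega

end NonCM

namespace NonCM

variable {K : Type*} [Field K]

/-- the monomial ideal generated by the 8 leading monomials -/
def Mi (K : Type*) [Field K] : Ideal (MvPolynomial (Fin 4) K) :=
  Ideal.span ((fun g => (monomial g (1 : K))) '' S8)

lemma gen_mem_Mi {g : Fin 4 →₀ ℕ} (hg : g ∈ S8) : (monomial g (1 : K)) ∈ Mi K :=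
  Ideal.subset_span ⟨g, hg, rfl⟩

lemma monomial_mem_Mi {μ g : Fin 4 →₀ ℕ} (hg : g ∈ S8) (hle : g ≤ μ) (c : K) :
    (monomial μ c) ∈ Mi K := by
  have : (monomial μ c : MvPolynomial (Fin 4) K) = monomial (μ - g) c * monomial g 1 := by
    rw [monomial_mul, mul_one, tsub_add_cancel_of_le hle]
  rw [this]
  exact Ideal.mul_mem_left _ _ (gen_mem_Mi hg)

lemma mem_Mi_of_support (f : MvPolynomial (Fin 4) K)
    (h : ∀ μ ∈ f.support, ∃ g ∈ S8, g ≤ μ) : f ∈ Mi K := by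
  rw [f.as_sum]
  refine Ideal.sum_mem _ fun μ hμ => ?_
  obtain ⟨g, hg, hle⟩ := h μ hμ
  exact monomial_mem_Mi hg hle _

lemma support_div_of_mem_Mi (f : MvPolynomial (Fin 4) K) (hf : f ∈ Mi K) :
    ∀ μ ∈ f.support, ∃ g ∈ S8, g ≤ μ := by
  refine Submodule.span_induction ?_ ?_ ?_ ?_ hf
  · rintro x ⟨g, hg, rfl⟩ μ hμ
    classical
    rw [support_monomial, if_neg (one_ne_zero : (1:K) ≠ 0), Finset.mem_singleton] at hμ
    exact ⟨g, hg, hμ ▸ le_refl g⟩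
  · intro μ hμ; simp at hμ
  · intro x y _ _ hx hy μ hμ
    rcases Finset.mem_union.1 (MvPolynomial.support_add hμ) with h | h
    · exact hx μ h
    · exact hy μ h
  · intro a x _ hx μ hμ
    rw [smul_eq_mul] at hμ
    obtain ⟨ν, hν, τ, hτ, hμ'⟩ := Finset.mem_add.1 (MvPolynomial.support_mul _ _ hμ)
    obtain ⟨g, hg, hle⟩ := hx τ hτ
    exact ⟨g, hg, hle.trans (hμ' ▸ le_add_self)⟩

end NonCM

namespace NonCM

variable {K : Type*} [Field K]

/-- the span of the three defining binomials -/
def Ji (K : Type*) [Field K] : Ideal (MvPolynomial (Fin 4) K) :=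
  Ideal.span ({X 0 ^ 12 - X 1 ^ 5, X 2 ^ 8 - X 3 ^ 7, X 0 * X 1 - X 2 ^ 3} :
    Set (MvPolynomial (Fin 4) K))

lemma mem_Ji (p q r : MvPolynomial (Fin 4) K) :
    p * (X 0 ^ 12 - X 1 ^ 5) + q * (X 2 ^ 8 - X 3 ^ 7) + r * (X 0 * X 1 - X 2 ^ 3) ∈ Ji K := by
  refine Ideal.add_mem _ (Ideal.add_mem _ ?_ ?_) ?_ <;>
    exact Ideal.mul_mem_left _ _ (Ideal.subset_span (by simp [Set.mem_insert_iff]))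

lemma monomial_single_pow (i : Fin 4) (k : ℕ) :
    (monomial (Finsupp.single i k) (1 : K)) = X i ^ k := X_pow_eq_monomial.symm

lemma monomial_single_add_pow (i j : Fin 4) (k l : ℕ) :
    (monomial (Finsupp.single i k + Finsupp.single j l) (1 : K)) = X i ^ k * X j ^ l := by
  rw [X_pow_eq_monomial, X_pow_eq_monomial, monomial_mul, one_mul]

-- the eight rewrite binomials lie in Ji
lemma binom1 : (monomial E4 (1:K)) - monomial (Finsupp.single 2 8) 1 ∈ Ji K := by
  rw [E4, monomial_single_pow, monomial_single_pow]
  have : (X 3 ^ 7 - X 2 ^ 8 : MvPolynomial (Fin 4) K) =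
      0 * (X 0 ^ 12 - X 1 ^ 5) + (-1) * (X 2 ^ 8 - X 3 ^ 7) + 0 * (X 0 * X 1 - X 2 ^ 3) := by
    ring
  rw [this]; exact mem_Ji _ _ _

lemma binom2 : (monomial E1 (1:K)) - monomial (Finsupp.single 2 3) 1 ∈ Ji K := by
  rw [E1, monomial_single_add_pow, monomial_single_pow]
  have : (X 0 ^ 1 * X 1 ^ 1 - X 2 ^ 3 : MvPolynomial (Fin 4) K) =
      0 * (X 0 ^ 12 - X 1 ^ 5) + 0 * (X 2 ^ 8 - X 3 ^ 7) + 1 * (X 0 * X 1 - X 2 ^ 3) := by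
    ring
  rw [this]; exact mem_Ji _ _ _

lemma binom3 : (monomial E2 (1:K)) - monomial (Finsupp.single 0 12) 1 ∈ Ji K := by
  rw [E2, monomial_single_pow, monomial_single_pow]
  have : (X 1 ^ 5 - X 0 ^ 12 : MvPolynomial (Fin 4) K) =
      (-1) * (X 0 ^ 12 - X 1 ^ 5) + 0 * (X 2 ^ 8 - X 3 ^ 7) + 0 * (X 0 * X 1 - X 2 ^ 3) := by
    ring
  rw [this]; exact mem_Ji _ _ _

lemma binom4 : (monomial E3 (1:K)) - monomial (Finsupp.single 0 17) 1 ∈ Ji K := by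
  rw [E3, monomial_single_pow, monomial_single_pow]
  have : (X 2 ^ 15 - X 0 ^ 17 : MvPolynomial (Fin 4) K) =
      (-(X 0 ^ 5)) * (X 0 ^ 12 - X 1 ^ 5) + 0 * (X 2 ^ 8 - X 3 ^ 7) +
        (-(X 2 ^ 12 + X 2 ^ 9 * (X 0 * X 1) + X 2 ^ 6 * (X 0 * X 1) ^ 2 +
          X 2 ^ 3 * (X 0 * X 1) ^ 3 + (X 0 * X 1) ^ 4)) * (X 0 * X 1 - X 2 ^ 3) := by
    ring
  rw [this]; exact mem_Ji _ _ _

lemma binom5 : (monomial E5 (1:K)) - monomial (Finsupp.single 0 13) 1 ∈ Ji K := by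
  rw [E5, monomial_single_add_pow, monomial_single_pow]
  have : (X 1 ^ 4 * X 2 ^ 3 - X 0 ^ 13 : MvPolynomial (Fin 4) K) =
      (-(X 0)) * (X 0 ^ 12 - X 1 ^ 5) + 0 * (X 2 ^ 8 - X 3 ^ 7) +
        (-(X 1 ^ 4)) * (X 0 * X 1 - X 2 ^ 3) := by ring
  rw [this]; exact mem_Ji _ _ _

lemma binom6 : (monomial E6 (1:K)) - monomial (Finsupp.single 0 14) 1 ∈ Ji K := by
  rw [E6, monomial_single_add_pow, monomial_single_pow]
  have : (X 1 ^ 3 * X 2 ^ 6 - X 0 ^ 14 : MvPolynomial (Fin 4) K) =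
      (-(X 0 ^ 2)) * (X 0 ^ 12 - X 1 ^ 5) + 0 * (X 2 ^ 8 - X 3 ^ 7) +
        (-(X 1 ^ 3 * (X 2 ^ 3 + X 0 * X 1))) * (X 0 * X 1 - X 2 ^ 3) := by ring
  rw [this]; exact mem_Ji _ _ _

lemma binom7 : (monomial E7 (1:K)) - monomial (Finsupp.single 0 15) 1 ∈ Ji K := by
  rw [E7, monomial_single_add_pow, monomial_single_pow]
  have : (X 1 ^ 2 * X 2 ^ 9 - X 0 ^ 15 : MvPolynomial (Fin 4) K) =
      (-(X 0 ^ 3)) * (X 0 ^ 12 - X 1 ^ 5) + 0 * (X 2 ^ 8 - X 3 ^ 7) +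
        (-(X 1 ^ 2 * (X 2 ^ 6 + X 2 ^ 3 * (X 0 * X 1) + (X 0 * X 1) ^ 2))) *
          (X 0 * X 1 - X 2 ^ 3) := by ring
  rw [this]; exact mem_Ji _ _ _

lemma binom8 : (monomial E8 (1:K)) - monomial (Finsupp.single 0 16) 1 ∈ Ji K := by
  rw [E8, monomial_single_add_pow, monomial_single_pow]
  have : (X 1 ^ 1 * X 2 ^ 12 - X 0 ^ 16 : MvPolynomial (Fin 4) K) =
      (-(X 0 ^ 4)) * (X 0 ^ 12 - X 1 ^ 5) + 0 * (X 2 ^ 8 - X 3 ^ 7) +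
        (-(X 1 * (X 2 ^ 9 + X 2 ^ 6 * (X 0 * X 1) + X 2 ^ 3 * (X 0 * X 1) ^ 2 +
          (X 0 * X 1) ^ 3))) * (X 0 * X 1 - X 2 ^ 3) := by ring
  rw [this]; exact mem_Ji _ _ _

end NonCM

namespace NonCM

variable {K : Type*} [Field K]

/-- termination measure -/
def Φ (μ : Fin 4 →₀ ℕ) : ℕ := 2 * μ 0 + 8 * μ 1 + 3 * μ 2 + 4 * μ 3

lemma coords4 (μ B B' : Fin 4 →₀ ℕ) (i : Fin 4) : (μ - B + B') i = μ i - B i + B' i := by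
  rw [Finsupp.add_apply, Finsupp.tsub_apply]

lemma single0c (k : ℕ) : (Finsupp.single (0 : Fin 4) k) 0 = k ∧
    (Finsupp.single (0 : Fin 4) k) 1 = 0 ∧ (Finsupp.single (0 : Fin 4) k) 2 = 0 ∧
    (Finsupp.single (0 : Fin 4) k) 3 = 0 := by
  refine ⟨?_, ?_, ?_, ?_⟩ <;> simp [Finsupp.single_apply]

lemma single2c (k : ℕ) : (Finsupp.single (2 : Fin 4) k) 0 = 0 ∧
    (Finsupp.single (2 : Fin 4) k) 1 = 0 ∧ (Finsupp.single (2 : Fin 4) k) 2 = k ∧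
    (Finsupp.single (2 : Fin 4) k) 3 = 0 := by
  refine ⟨?_, ?_, ?_, ?_⟩ <;> simp [Finsupp.single_apply]

lemma step_mem (μ B B' : Fin 4 →₀ ℕ) (hle : B ≤ μ)
    (hbin : (monomial B (1:K)) - monomial B' 1 ∈ Ji K) :
    (monomial μ (1:K)) - monomial (μ - B + B') 1 ∈ Ji K := by
  have hmu : (monomial μ (1:K)) - monomial (μ - B + B') 1 =
      monomial (μ - B) 1 * ((monomial B 1) - monomial B' 1) := by
    rw [mul_sub, monomial_mul, monomial_mul, mul_one, tsub_add_cancel_of_le hle]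
  rw [hmu]
  exact Ideal.mul_mem_left _ _ hbin

/-- one rewriting step -/
lemma rewrite_step (μ : Fin 4 →₀ ℕ) (h : ¬ NF μ) :
    ∃ μ', Φ μ' < Φ μ ∧ ordm μ' = ordm μ ∧ (monomial μ (1:K)) - monomial μ' 1 ∈ Ji K := by
  obtain ⟨a1, a2, a3, a4⟩ := E1c; obtain ⟨b1, b2, b3, b4⟩ := E2c
  obtain ⟨c1, c2, c3, c4⟩ := E3c; obtain ⟨d1, d2, d3, d4⟩ := E4c
  obtain ⟨e1, e2, e3, e4⟩ := E5c; obtain ⟨f1, f2, f3, f4⟩ := E6c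
  obtain ⟨g1, g2, g3, g4⟩ := E7c; obtain ⟨h1, h2, h3, h4⟩ := E8c
  by_cases k1 : 1 ≤ μ 0 ∧ 1 ≤ μ 1
  · refine ⟨μ - E1 + Finsupp.single 2 3, ?_, ?_, step_mem _ _ _ ?_ binom2⟩
    · obtain ⟨s1, s2, s3, s4⟩ := single2c 3
      simp only [Φ, coords4, a1, a2, a3, a4, s1, s2, s3, s4]; omega
    · obtain ⟨s1, s2, s3, s4⟩ := single2c 3
      simp only [ordm, coords4, a1, a2, a3, a4, s1, s2, s3, s4]; omega
    · rw [le4, a1, a2, a3, a4]; omega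
  by_cases k2 : 5 ≤ μ 1
  · refine ⟨μ - E2 + Finsupp.single 0 12, ?_, ?_, step_mem _ _ _ ?_ binom3⟩
    · obtain ⟨s1, s2, s3, s4⟩ := single0c 12
      simp only [Φ, coords4, b1, b2, b3, b4, s1, s2, s3, s4]; omega
    · obtain ⟨s1, s2, s3, s4⟩ := single0c 12
      simp only [ordm, coords4, b1, b2, b3, b4, s1, s2, s3, s4]; omega
    · rw [le4, b1, b2, b3, b4]; omega
  by_cases k3 : 15 ≤ μ 2
  · refine ⟨μ - E3 + Finsupp.single 0 17, ?_, ?_, step_mem _ _ _ ?_ binom4⟩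
    · obtain ⟨s1, s2, s3, s4⟩ := single0c 17
      simp only [Φ, coords4, c1, c2, c3, c4, s1, s2, s3, s4]; omega
    · obtain ⟨s1, s2, s3, s4⟩ := single0c 17
      simp only [ordm, coords4, c1, c2, c3, c4, s1, s2, s3, s4]; omega
    · rw [le4, c1, c2, c3, c4]; omega
  by_cases k4 : 7 ≤ μ 3
  · refine ⟨μ - E4 + Finsupp.single 2 8, ?_, ?_, step_mem _ _ _ ?_ binom1⟩
    · obtain ⟨s1, s2, s3, s4⟩ := single2c 8
      simp only [Φ, coords4, d1, d2, d3, d4, s1, s2, s3, s4]; omega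
    · obtain ⟨s1, s2, s3, s4⟩ := single2c 8
      simp only [ordm, coords4, d1, d2, d3, d4, s1, s2, s3, s4]; omega
    · rw [le4, d1, d2, d3, d4]; omega
  by_cases k5 : 4 ≤ μ 1 ∧ 3 ≤ μ 2
  · refine ⟨μ - E5 + Finsupp.single 0 13, ?_, ?_, step_mem _ _ _ ?_ binom5⟩
    · obtain ⟨s1, s2, s3, s4⟩ := single0c 13
      simp only [Φ, coords4, e1, e2, e3, e4, s1, s2, s3, s4]; omega
    · obtain ⟨s1, s2, s3, s4⟩ := single0c 13
      simp only [ordm, coords4, e1, e2, e3, e4, s1, s2, s3, s4]; omega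
    · rw [le4, e1, e2, e3, e4]; omega
  by_cases k6 : 3 ≤ μ 1 ∧ 6 ≤ μ 2
  · refine ⟨μ - E6 + Finsupp.single 0 14, ?_, ?_, step_mem _ _ _ ?_ binom6⟩
    · obtain ⟨s1, s2, s3, s4⟩ := single0c 14
      simp only [Φ, coords4, f1, f2, f3, f4, s1, s2, s3, s4]; omega
    · obtain ⟨s1, s2, s3, s4⟩ := single0c 14
      simp only [ordm, coords4, f1, f2, f3, f4, s1, s2, s3, s4]; omega
    · rw [le4, f1, f2, f3, f4]; omega
  by_cases k7 : 2 ≤ μ 1 ∧ 9 ≤ μ 2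
  · refine ⟨μ - E7 + Finsupp.single 0 15, ?_, ?_, step_mem _ _ _ ?_ binom7⟩
    · obtain ⟨s1, s2, s3, s4⟩ := single0c 15
      simp only [Φ, coords4, g1, g2, g3, g4, s1, s2, s3, s4]; omega
    · obtain ⟨s1, s2, s3, s4⟩ := single0c 15
      simp only [ordm, coords4, g1, g2, g3, g4, s1, s2, s3, s4]; omega
    · rw [le4, g1, g2, g3, g4]; omega
  by_cases k8 : 1 ≤ μ 1 ∧ 12 ≤ μ 2
  · refine ⟨μ - E8 + Finsupp.single 0 16, ?_, ?_, step_mem _ _ _ ?_ binom8⟩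
    · obtain ⟨s1, s2, s3, s4⟩ := single0c 16
      simp only [Φ, coords4, h1, h2, h3, h4, s1, s2, s3, s4]; omega
    · obtain ⟨s1, s2, s3, s4⟩ := single0c 16
      simp only [ordm, coords4, h1, h2, h3, h4, s1, s2, s3, s4]; omega
    · rw [le4, h1, h2, h3, h4]; omega
  exact absurd (by unfold NF; omega) h

end NonCM

namespace NonCM

variable {K : Type*} [Field K]

def Φtot (f : MvPolynomial (Fin 4) K) : ℕ := ∑ μ ∈ f.support, Φ μ

lemma sum_insert_le' (s : Finset (Fin 4 →₀ ℕ)) (a : Fin 4 →₀ ℕ) (g : (Fin 4 →₀ ℕ) → ℕ) :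
    ∑ x ∈ insert a s, g x ≤ g a + ∑ x ∈ s, g x := by
  by_cases h : a ∈ s
  · rw [Finset.insert_eq_self.2 h]; exact Nat.le_add_left _ _
  · rw [Finset.sum_insert h]

lemma Ji_le_ker : Ji K ≤ curveIdeal K nn := by
  rw [Ji, Ideal.span_le]
  intro g hg
  simp only [Set.mem_insert_iff, Set.mem_singleton_iff] at hg
  have hX : ∀ i : Fin 4, Ψ (K := K) (X i) = Polynomial.X ^ nn i := fun i => aeval_X _ i
  rcases hg with rfl | rfl | rfl <;>
    · show Ψ _ = 0
      rw [map_sub]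
      simp only [map_pow, map_mul, hX, ← pow_mul, ← pow_add]
      have h2 : nn 2 = 119 := rfl
      have h3 : nn 3 = 136 := rfl
      norm_num [h2, h3]

lemma ker_le_Ji : ∀ (N : ℕ) (f : MvPolynomial (Fin 4) K),
    Φtot f = N → f ∈ curveIdeal K nn → f ∈ Ji K := by
  intro N
  induction N using Nat.strong_induction_on with
  | _ N IH =>
    intro f hN hker
    by_cases hall : ∀ μ ∈ f.support, NF μ
    · -- all normal: f must be zero
      have hf : f = 0 := by
        by_contra hf0
        obtain ⟨μ, hμ⟩ := (support_nonempty.2 hf0 : f.support.Nonempty)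
        refine Ψ_ne_zero f μ hμ (fun ν hν hne hord => ?_) hker
        have lt1 := claimB μ ν (hall μ hμ) hord hne
        have lt2 := claimB ν μ (hall ν hν) hord.symm (Ne.symm hne)
        exact absurd lt1 (by omega)
      rw [hf]; exact zero_mem _
    · push_neg at hall
      obtain ⟨μ, hμ, hnf⟩ := hall
      obtain ⟨μ', hΦ, hord, hbin⟩ := rewrite_step (K := K) μ hnf
      have hμne : μ' ≠ μ := fun h => absurd hΦ (by rw [h]; omega)
      set c := coeff μ f with hc
      set g : MvPolynomial (Fin 4) K := C c * ((monomial μ 1) - monomial μ' 1) with hg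
      have hgJ : g ∈ Ji K := Ideal.mul_mem_left _ _ hbin
      set f' := f - g with hf'
      have hf'ker : f' ∈ curveIdeal K nn := sub_mem hker (Ji_le_ker hgJ)
      have hcoeffg : ∀ ν, coeff ν g = c * ((if μ = ν then (1:K) else 0) -
          (if μ' = ν then (1:K) else 0)) := by
        intro ν
        rw [hg, coeff_C_mul, coeff_sub, coeff_monomial, coeff_monomial]
      have hsupp : f'.support ⊆ insert μ' (f.support.erase μ) := by
        intro ν hν
        rw [mem_support_iff] at hν
        by_contra hmem
        simp only [Finset.mem_insert, Finset.mem_erase, not_or, not_and_or] at hmem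
        obtain ⟨hνμ', hνμ⟩ := hmem
        rcases hνμ with hνμ | hνs
        · push_neg at hνμ
          apply hν
          rw [hf', coeff_sub, hcoeffg, if_pos hνμ.symm, if_neg (fun h => hνμ' h.symm)]
          rw [hνμ, ← hc]; ring
        · apply hν
          have hν0 : coeff ν f = 0 := by
            by_contra h0
            exact hνs (mem_support_iff.2 h0)
          have hνμ : ν ≠ μ := by
            intro h; rw [h, ← hc] at hν0
            rw [hf', coeff_sub, hcoeffg] at hν
            apply hν
            rw [h, ← hc, if_pos rfl, if_neg (fun hh => hμne hh), hν0]; ring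
          rw [hf', coeff_sub, hcoeffg, if_neg (fun h => hνμ h.symm),
            if_neg (fun h => hνμ' h.symm), hν0]
          ring
      have hΦtot : Φtot f' < Φtot f := by
        calc Φtot f' ≤ ∑ x ∈ insert μ' (f.support.erase μ), Φ x :=
              Finset.sum_le_sum_of_subset hsupp
          _ ≤ Φ μ' + ∑ x ∈ f.support.erase μ, Φ x := sum_insert_le' _ _ _
          _ < Φ μ + ∑ x ∈ f.support.erase μ, Φ x := by omega
          _ = Φtot f := Finset.add_sum_erase _ _ hμ
      have hf'J : f' ∈ Ji K := IH (Φtot f') (hN ▸ hΦtot) f' rfl hf'ker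
      have : f = f' + g := by rw [hf']; ring
      rw [this]
      exact Ideal.add_mem _ hf'J hgJ

theorem part1 : curveIdeal K nn = Ji K := by
  refine le_antisymm (fun f hf => ker_le_Ji (Φtot f) f rfl hf) Ji_le_ker

end NonCM

namespace NonCM

variable {K : Type*} [Field K]

lemma monDeg_eq (μ : Fin 4 →₀ ℕ) : monDeg μ = monDeg' μ := rfl

lemma degree_eq_monDeg (μ : Fin 4 →₀ ℕ) : μ.degree = monDeg μ := by
  rw [Finsupp.degree, monDeg, Finsupp.sum]; rfl

lemma minDeg_le {f : MvPolynomial (Fin 4) K} {ν : Fin 4 →₀ ℕ} (h : ν ∈ f.support) :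
    minDeg f ≤ monDeg ν :=
  Nat.sInf_le ⟨ν, Finset.mem_coe.2 h, rfl⟩

lemma mem_support_lowHom {f : MvPolynomial (Fin 4) K} {μ : Fin 4 →₀ ℕ}
    (h : μ ∈ (lowHom f).support) : μ ∈ f.support ∧ monDeg μ = minDeg f := by
  rw [mem_support_iff, lowHom, coeff_homogeneousComponent] at h
  by_cases hd : μ.degree = minDeg f
  · rw [if_pos hd] at h
    exact ⟨mem_support_iff.2 h, (degree_eq_monDeg μ) ▸ hd⟩
  · rw [if_neg hd] at h; exact absurd rfl h

/-- part 2, forward inclusion -/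
lemma tc_le_Mi : tangentConeIdeal K nn ≤ Mi K := by
  rw [tangentConeIdeal, Ideal.span_le]
  rintro g ⟨f, hf, hf0, rfl⟩
  refine mem_Mi_of_support _ fun μ hμ => ?_
  by_contra hdiv
  push_neg at hdiv
  have hNF : NF μ := (NF_iff_no_div μ).2 hdiv
  obtain ⟨hμf, hμdeg⟩ := mem_support_lowHom hμ
  refine Ψ_ne_zero f μ hμf (fun ν hν hne hord => ?_) hf
  have hlt := claimB μ ν hNF hord hne
  rw [← monDeg_eq, ← monDeg_eq] at hlt
  have := minDeg_le hν
  omega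

lemma support_binom {μ1 μ2 : Fin 4 →₀ ℕ} (hne : μ1 ≠ μ2) :
    ((monomial μ1 (1:K)) - monomial μ2 1).support = {μ1, μ2} := by
  classical
  ext ν
  rw [mem_support_iff, coeff_sub, coeff_monomial, coeff_monomial, Finset.mem_insert,
    Finset.mem_singleton]
  by_cases h1 : μ1 = ν <;> by_cases h2 : μ2 = ν
  · exact absurd (h1.trans h2.symm) hne
  · simp [h1, h2, eq_comm]
  · simp [h1, h2, eq_comm]
  · rw [if_neg h1, if_neg h2, sub_zero]
    constructor
    · intro h; exact absurd rfl h
    · rintro (h | h)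
      · exact absurd h.symm h1
      · exact absurd h.symm h2

lemma lowHom_binom {μ1 μ2 : Fin 4 →₀ ℕ} (hdeg : monDeg μ1 < monDeg μ2) :
    lowHom ((monomial μ1 (1:K)) - monomial μ2 1) = monomial μ1 1 ∧
      ((monomial μ1 (1:K)) - monomial μ2 1) ≠ 0 := by
  classical
  have hne : μ1 ≠ μ2 := fun h => absurd hdeg (by rw [h]; omega)
  have hsupp := support_binom (K := K) hne
  have hne0 : ((monomial μ1 (1:K)) - monomial μ2 1) ≠ 0 := by
    intro h0
    rw [h0, MvPolynomial.support_zero] at hsupp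
    exact absurd hsupp.symm (by simp)
  have hmin : minDeg ((monomial μ1 (1:K)) - monomial μ2 1) = monDeg μ1 := by
    rw [minDeg, hsupp, Finset.coe_insert, Finset.coe_singleton, Set.image_insert_eq,
      Set.image_singleton, csInf_pair]
    exact inf_eq_left.2 hdeg.le
  refine ⟨?_, hne0⟩
  rw [lowHom, hmin]
  ext ν
  rw [coeff_homogeneousComponent, coeff_monomial]
  by_cases h1 : μ1 = ν
  · rw [if_pos h1, ← h1, degree_eq_monDeg, if_pos rfl, coeff_sub, coeff_monomial,
      coeff_monomial, if_pos rfl, if_neg hne.symm]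
    ring
  · rw [if_neg h1]
    by_cases hd : ν.degree = monDeg μ1
    · rw [if_pos hd, coeff_sub, coeff_monomial, coeff_monomial, if_neg h1, if_neg ?_]
      · ring
      · intro h2
        rw [← h2, degree_eq_monDeg] at hd
        omega
    · rw [if_neg hd]

end NonCM

namespace NonCM

variable {K : Type*} [Field K]

lemma monDeg_apply4 (μ : Fin 4 →₀ ℕ) : monDeg μ = μ 0 + μ 1 + μ 2 + μ 3 :=
  (monDeg_eq μ).trans (monDeg'_apply μ)

lemma binom_ker {B B' : Fin 4 →₀ ℕ} (h : ordm B = ordm B') :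
    (monomial B (1:K)) - monomial B' 1 ∈ curveIdeal K nn := by
  show Ψ _ = 0
  rw [map_sub, aeval_monomial', aeval_monomial', h, sub_self]

lemma tc_mem {B B' : Fin 4 →₀ ℕ} (hord : ordm B = ordm B') (hdeg : monDeg B < monDeg B') :
    (monomial B (1:K)) ∈ tangentConeIdeal K nn := by
  obtain ⟨hlow, hne0⟩ := lowHom_binom (K := K) hdeg
  exact Ideal.subset_span ⟨_, binom_ker hord, hne0, hlow.symm⟩

lemma Mi_le_tc : Mi K ≤ tangentConeIdeal K nn := by
  rw [Mi, Ideal.span_le]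
  rintro g ⟨μ, hμ, rfl⟩
  obtain ⟨a1, a2, a3, a4⟩ := E1c; obtain ⟨b1, b2, b3, b4⟩ := E2c
  obtain ⟨c1, c2, c3, c4⟩ := E3c; obtain ⟨d1, d2, d3, d4⟩ := E4c
  obtain ⟨e1, e2, e3, e4⟩ := E5c; obtain ⟨f1, f2, f3, f4⟩ := E6c
  obtain ⟨g1, g2, g3, g4⟩ := E7c; obtain ⟨h1, h2, h3, h4⟩ := E8c
  simp only [S8, Set.mem_insert_iff, Set.mem_singleton_iff] at hμ
  rcases hμ with rfl | rfl | rfl | rfl | rfl | rfl | rfl | rfl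
  · obtain ⟨s1, s2, s3, s4⟩ := single2c 3
    refine tc_mem (B' := Finsupp.single 2 3) ?_ ?_
    · rw [ordm, ordm, a1, a2, a3, a4, s1, s2, s3, s4]
    · rw [monDeg_apply4, monDeg_apply4, a1, a2, a3, a4, s1, s2, s3, s4]; norm_num
  · obtain ⟨s1, s2, s3, s4⟩ := single0c 12
    refine tc_mem (B' := Finsupp.single 0 12) ?_ ?_
    · rw [ordm, ordm, b1, b2, b3, b4, s1, s2, s3, s4]
    · rw [monDeg_apply4, monDeg_apply4, b1, b2, b3, b4, s1, s2, s3, s4]; norm_num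
  · obtain ⟨s1, s2, s3, s4⟩ := single0c 17
    refine tc_mem (B' := Finsupp.single 0 17) ?_ ?_
    · rw [ordm, ordm, c1, c2, c3, c4, s1, s2, s3, s4]
    · rw [monDeg_apply4, monDeg_apply4, c1, c2, c3, c4, s1, s2, s3, s4]; norm_num
  · obtain ⟨s1, s2, s3, s4⟩ := single2c 8
    refine tc_mem (B' := Finsupp.single 2 8) ?_ ?_
    · rw [ordm, ordm, d1, d2, d3, d4, s1, s2, s3, s4]
    · rw [monDeg_apply4, monDeg_apply4, d1, d2, d3, d4, s1, s2, s3, s4]; norm_num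
  · obtain ⟨s1, s2, s3, s4⟩ := single0c 13
    refine tc_mem (B' := Finsupp.single 0 13) ?_ ?_
    · rw [ordm, ordm, e1, e2, e3, e4, s1, s2, s3, s4]
    · rw [monDeg_apply4, monDeg_apply4, e1, e2, e3, e4, s1, s2, s3, s4]; norm_num
  · obtain ⟨s1, s2, s3, s4⟩ := single0c 14
    refine tc_mem (B' := Finsupp.single 0 14) ?_ ?_
    · rw [ordm, ordm, f1, f2, f3, f4, s1, s2, s3, s4]
    · rw [monDeg_apply4, monDeg_apply4, f1, f2, f3, f4, s1, s2, s3, s4]; norm_num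
  · obtain ⟨s1, s2, s3, s4⟩ := single0c 15
    refine tc_mem (B' := Finsupp.single 0 15) ?_ ?_
    · rw [ordm, ordm, g1, g2, g3, g4, s1, s2, s3, s4]
    · rw [monDeg_apply4, monDeg_apply4, g1, g2, g3, g4, s1, s2, s3, s4]; norm_num
  · obtain ⟨s1, s2, s3, s4⟩ := single0c 16
    refine tc_mem (B' := Finsupp.single 0 16) ?_ ?_
    · rw [ordm, ordm, h1, h2, h3, h4, s1, s2, s3, s4]
    · rw [monDeg_apply4, monDeg_apply4, h1, h2, h3, h4, s1, s2, s3, s4]; norm_num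

theorem part2 : tangentConeIdeal K nn = Mi K := le_antisymm tc_le_Mi Mi_le_tc

-- conversions of the stated generators to monomial form
lemma conv1 : (X 0 * X 1 : MvPolynomial (Fin 4) K) = monomial E1 1 := by
  rw [E1, monomial_single_add_pow, pow_one, pow_one]
lemma conv2 : (X 1 ^ 5 : MvPolynomial (Fin 4) K) = monomial E2 1 := by
  rw [E2, monomial_single_pow]
lemma conv3 : (X 2 ^ 15 : MvPolynomial (Fin 4) K) = monomial E3 1 := by
  rw [E3, monomial_single_pow]
lemma conv4 : (X 3 ^ 7 : MvPolynomial (Fin 4) K) = monomial E4 1 := by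
  rw [E4, monomial_single_pow]
lemma conv5 : (X 1 ^ 4 * X 2 ^ 3 : MvPolynomial (Fin 4) K) = monomial E5 1 := by
  rw [E5, monomial_single_add_pow]
lemma conv6 : (X 1 ^ 3 * X 2 ^ 6 : MvPolynomial (Fin 4) K) = monomial E6 1 := by
  rw [E6, monomial_single_add_pow]
lemma conv7 : (X 1 ^ 2 * X 2 ^ 9 : MvPolynomial (Fin 4) K) = monomial E7 1 := by
  rw [E7, monomial_single_add_pow]
lemma conv8 : (X 1 * X 2 ^ 12 : MvPolynomial (Fin 4) K) = monomial E8 1 := by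
  rw [E8, monomial_single_add_pow, pow_one]

lemma Gset_eq : ({X 0 * X 1, X 1 ^ 5, X 2 ^ 15, X 3 ^ 7, X 1 ^ 4 * X 2 ^ 3,
    X 1 ^ 3 * X 2 ^ 6, X 1 ^ 2 * X 2 ^ 9, X 1 * X 2 ^ 12} :
      Set (MvPolynomial (Fin 4) K)) = (fun g => monomial g (1 : K)) '' S8 := by
  simp only [S8, Set.image_insert_eq, Set.image_singleton]
  rw [conv1, conv2, conv3, conv4, conv5, conv6, conv7, conv8]

theorem part2' : tangentConeIdeal K nn =
    Ideal.span ({X 0 * X 1, X 1 ^ 5, X 2 ^ 15, X 3 ^ 7, X 1 ^ 4 * X 2 ^ 3,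
      X 1 ^ 3 * X 2 ^ 6, X 1 ^ 2 * X 2 ^ 9, X 1 * X 2 ^ 12} :
        Set (MvPolynomial (Fin 4) K)) := by
  rw [part2, Mi, Gset_eq]

end NonCM

namespace NonCM

variable {K : Type*} [Field K]

abbrev ρ : Fin 4 → ℕ := ![3, 0, 2, 1]

lemma isLM_monomial (μ : Fin 4 →₀ ℕ) : IsLM ρ (monomial μ (1:K)) μ := by
  classical
  constructor
  · rw [mem_support_iff, coeff_monomial, if_pos rfl]
    exact one_ne_zero
  · intro μ' hμ' hne
    rw [support_monomial, if_neg (one_ne_zero : (1:K) ≠ 0), Finset.mem_singleton] at hμ'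
    exact absurd hμ' hne

lemma isLM_monomial_eq {μ ν : Fin 4 →₀ ℕ} (h : IsLM ρ (monomial μ (1:K)) ν) : ν = μ := by
  classical
  have := h.1
  rwa [support_monomial, if_neg (one_ne_zero : (1:K) ≠ 0), Finset.mem_singleton] at this

lemma lm_set_eq :
    {μ | ∃ g ∈ (fun g => monomial g (1 : K)) '' S8, IsLM ρ g μ} = S8 := by
  ext ν
  constructor
  · rintro ⟨g, ⟨μ, hμ, rfl⟩, hLM⟩
    exact (isLM_monomial_eq hLM) ▸ hμ
  · intro hν
    exact ⟨monomial ν 1, ⟨ν, hν, rfl⟩, isLM_monomial ν⟩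

lemma lmIdeal_eq_Mi : lmIdeal K ρ (tangentConeIdeal K nn) = Mi K := by
  refine le_antisymm ?_ ?_
  · rw [lmIdeal, Ideal.span_le]
    rintro p ⟨μ, ⟨f, hfI, hLM⟩, rfl⟩
    have hf : f ∈ Mi K := by rw [← part2]; exact hfI
    obtain ⟨g, hg, hle⟩ := support_div_of_mem_Mi f hf μ hLM.1
    exact monomial_mem_Mi hg hle 1
  · rw [Mi, Ideal.span_le]
    rintro p ⟨μ, hμ, rfl⟩
    refine Ideal.subset_span ⟨μ, ⟨monomial μ 1, ?_, isLM_monomial μ⟩, rfl⟩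
    exact Mi_le_tc (Ideal.subset_span ⟨μ, hμ, rfl⟩)

theorem part3 : IsStandardBasis K ρ (tangentConeIdeal K nn)
    ({X 0 * X 1, X 1 ^ 5, X 2 ^ 15, X 3 ^ 7, X 1 ^ 4 * X 2 ^ 3,
      X 1 ^ 3 * X 2 ^ 6, X 1 ^ 2 * X 2 ^ 9, X 1 * X 2 ^ 12} :
      Set (MvPolynomial (Fin 4) K)) := by
  refine ⟨Set.toFinite _, ?_, ?_⟩
  · rw [Gset_eq, part2, Mi]
    exact Ideal.subset_span
  · rw [Gset_eq, lm_set_eq, lmIdeal_eq_Mi, Mi]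

end NonCM


/-- **Example (continued).** For the glued curve `C = C(105, 252, 119, 136)` (with
variables `x₁, x₂, y₁, y₂` corresponding to `t¹⁰⁵, t²⁵², t¹¹⁹, t¹³⁶`), the defining
ideal is `I(C) = ⟨x₁¹² - x₂⁵, y₁⁸ - y₂⁷, x₁x₂ - y₁³⟩` and the tangent cone ideal
`I(C)_*` is generated by
`G_* = {x₁x₂, x₂⁵, y₁¹⁵, y₂⁷, x₂⁴y₁³, x₂³y₁⁶, x₂²y₁⁹, x₂y₁¹²}`, which is a Gröbner
(standard) basis of `I(C)_*` with respect to the negative degree reverse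
lexicographical ordering with `x₂ > y₂ > y₁ > x₁`. -/
theorem example_non_CM_gluing_ideals (K : Type*) [Field K] [IsAlgClosed K] :
    curveIdeal K ![105, 252, 119, 136] =
      Ideal.span ({X 0 ^ 12 - X 1 ^ 5, X 2 ^ 8 - X 3 ^ 7, X 0 * X 1 - X 2 ^ 3} :
        Set (MvPolynomial (Fin 4) K)) ∧
    tangentConeIdeal K ![105, 252, 119, 136] =
      Ideal.span ({X 0 * X 1, X 1 ^ 5, X 2 ^ 15, X 3 ^ 7, X 1 ^ 4 * X 2 ^ 3,
        X 1 ^ 3 * X 2 ^ 6, X 1 ^ 2 * X 2 ^ 9, X 1 * X 2 ^ 12} :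
        Set (MvPolynomial (Fin 4) K)) ∧
    IsStandardBasis K ![3, 0, 2, 1] (tangentConeIdeal K ![105, 252, 119, 136])
      ({X 0 * X 1, X 1 ^ 5, X 2 ^ 15, X 3 ^ 7, X 1 ^ 4 * X 2 ^ 3,
        X 1 ^ 3 * X 2 ^ 6, X 1 ^ 2 * X 2 ^ 9, X 1 * X 2 ^ 12} :
        Set (MvPolynomial (Fin 4) K)) := by
  exact ⟨NonCM.part1, NonCM.part2', NonCM.part3⟩

end
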